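/- Let Γ be a discrete group and g, h ∈ Γ such that g^n is not conjugate to h^n in Γ for every nonzero integer n. Then there is no unitary u in the group von Neumann algebra L(Γ) with u u_g = u_h u, i.e., the canonical group unitaries u_g and u_h are not conjugate by a unitary in L(Γ). -/

import Mathlib

/-!
STATEMENT 0. Let `Γ` be a discrete group and `g h : Γ` such that `g ^ n` is not conjugate to
`h ^ n` for every nonzero integer `n`. Then there is no unitary `u` in the group von Neumann
algebra `L(Γ)` with `u * u_g = u_h * u`.

An element `u` of `L(Γ)` is faithfully represented by its family of Fourier coefficients
`α k = ⟨u δ_e, δ_k⟩`, which is a square-summable family (`Memℓp α 2`); `u` is nonzero (in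
particular if `u` is a unitary) iff `α ≠ 0`, and the intertwining relation `u * u_g = u_h * u`
is equivalent to `α (h⁻¹ * k) = α (k * g⁻¹)` for all `k`.  We formalize the statement at the
level of these Fourier coefficients: there is no nonzero square-summable family of coefficients
satisfying the intertwining relation.  -/
theorem stmt0 (Γ : Type*) [Group Γ] (g h : Γ)
    (hconj : ∀ n : ℤ, n ≠ 0 → ∀ k : Γ, k * g ^ n * k⁻¹ ≠ h ^ n) :
    ¬ ∃ α : Γ → ℂ, Memℓp α 2 ∧ α ≠ 0 ∧ ∀ k : Γ, α (h⁻¹ * k) = α (k * g⁻¹) := by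
  rintro ⟨α, hmem, hne, hrel⟩
  apply hne
  funext k
  -- the orbit map
  set f : ℤ → Γ := fun n => h ^ n * k * g ^ (-n) with hf
  -- α is constant on the orbit
  have hstep : ∀ n : ℤ, α (f (n + 1)) = α (f n) := by
    intro n
    have hr := hrel (h ^ (n + 1) * k * g ^ (-n))
    have e1 : h⁻¹ * (h ^ (n + 1) * k * g ^ (-n)) = h ^ n * k * g ^ (-n) := by group
    have e2 : h ^ (n + 1) * k * g ^ (-n) * g⁻¹ = h ^ (n + 1) * k * g ^ (-(n + 1)) := by group
    simp only [hf]
    rw [← e2, ← hr, e1]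
  have hconst : ∀ n : ℤ, α (f n) = α k := by
    intro n
    induction n using Int.induction_on with
    | zero => simp [hf]
    | succ n ih => rw [hstep n]; exact ih
    | pred n ih => rw [← ih, ← hstep (-n - 1)]; norm_num
  -- f is injective
  have hinj : Function.Injective f := by
    intro m n hmn
    by_contra hne'
    apply hconj (m - n) (sub_ne_zero.mpr hne') k
    simp only [hf] at hmn
    have key : h ^ (m - n) * k = k * g ^ (m - n) := by
      calc h ^ (m - n) * k = h ^ (-n) * (h ^ m * k * g ^ (-m)) * g ^ m := by group
        _ = h ^ (-n) * (h ^ n * k * g ^ (-n)) * g ^ m := by rw [hmn]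
        _ = k * g ^ (m - n) := by group
    rw [← key]
    group
  -- summability forces the constant value to vanish
  have hsum : Summable fun i : Γ => ‖α i‖ ^ (2 : ℝ) := by
    refine hmem.summable ?_
    norm_num
  have hsum2 : Summable fun n : ℤ => ‖α (f n)‖ ^ (2 : ℝ) := hsum.comp_injective hinj
  have hsum3 : Summable fun _ : ℤ => ‖α k‖ ^ (2 : ℝ) := by
    simpa only [hconst] using hsum2
  have hzero : ‖α k‖ ^ (2 : ℝ) = 0 := by
    by_contra hz
    exact hz (tendsto_nhds_unique (tendsto_const_nhds) hsum3.tendsto_cofinite_zero)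
  have h0 : ‖α k‖ = 0 := by
    have := (Real.rpow_eq_zero (norm_nonneg (α k)) (by norm_num)).mp hzero
    exact this
  simpa using h0
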